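/- Let a > −1 be a real number and for each M ≥ 1 set Z_M = Σ_{k=1}^M k^a. Then lim_{M→∞} (1/M) Σ_{i=1}^M (1 − i^a/Z_M)^M = ∫_0^1 e^{−(a+1)x^a} dx. Consequently, in the algebraic fitness model φ(i) = i^a the asymptotic fraction of followers is f(a) = ∫_0^1 e^{−(a+1)x^a} dx and the asymptotic fraction of experts is e(a) = 1 − ∫_0^1 e^{−(a+1)x^a} dx. -/

import Mathlib

open MeasureTheory Filter Real

section Stmt11Helpers

lemma step_integral (M : ℕ) (hM : 1 ≤ M) (c : ℕ → ℝ) :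
    ∫ x in Set.Ioc (0:ℝ) 1, c ⌈(M:ℝ) * x⌉₊ = (1 / M) * ∑ i ∈ Finset.Icc 1 M, c i := by
  have hM0 : (0:ℝ) < M := by exact_mod_cast hM
  set g : ℝ → ℝ := fun x => c ⌈(M:ℝ) * x⌉₊ with hg
  have hceil : ∀ k : ℕ, ∀ x ∈ Set.Ioc ((k:ℝ)/M) (((k:ℝ)+1)/M), ⌈(M:ℝ) * x⌉₊ = k + 1 := by
    intro k x hx
    rw [Nat.ceil_eq_iff (Nat.succ_ne_zero k)]
    constructor
    · simp only [Nat.succ_sub_one]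
      push_cast
      calc (k:ℝ) = ((k:ℝ)/M) * M := by field_simp
      _ < x * M := by gcongr; exact hx.1
      _ = M * x := mul_comm _ _
    · push_cast
      calc (M:ℝ) * x ≤ M * (((k:ℝ)+1)/M) := by gcongr; exact hx.2
      _ = (k:ℝ) + 1 := by field_simp
  have hint : ∀ k : ℕ, k < M → IntervalIntegrable g volume ((k:ℝ)/M) (((k:ℝ)+1)/M) := by
    intro k _
    have hle : (k:ℝ)/M ≤ ((k:ℝ)+1)/M := by gcongr; linarith
    rw [intervalIntegrable_iff_integrableOn_Ioc_of_le hle]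
    have : Set.EqOn g (fun _ => c (k+1)) (Set.Ioc ((k:ℝ)/M) (((k:ℝ)+1)/M)) := by
      intro x hx; simp only [hg]; rw [hceil k x hx]
    exact (integrableOn_const (C := c (k+1)) (by simp [Real.volume_Ioc])).congr_fun
      (fun x hx => (this hx).symm) measurableSet_Ioc
  have hpiece : ∀ k : ℕ, k < M →
      ∫ x in ((k:ℝ)/M)..(((k:ℝ)+1)/M), g x = (1/M) * c (k+1) := by
    intro k _
    have hle : (k:ℝ)/M ≤ ((k:ℝ)+1)/M := by gcongr; linarith
    rw [intervalIntegral.integral_of_le hle]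
    rw [setIntegral_congr_fun measurableSet_Ioc (fun x hx => by simp only [hg]; rw [hceil k x hx])]
    rw [setIntegral_const, Real.volume_real_Ioc, max_eq_left (by linarith [hle] : (0:ℝ) ≤ ((k:ℝ)+1)/M - k/M)]
    have : ((k:ℝ)+1)/M - k/M = 1/M := by field_simp; ring
    rw [this, smul_eq_mul]
  have adj := intervalIntegral.sum_integral_adjacent_intervals (a := fun k : ℕ => (k:ℝ)/M)
    (μ := volume) (n := M) (f := g) ?_
  · have h0 : ((0:ℕ):ℝ)/M = 0 := by simp
    have h1 : ((M:ℕ):ℝ)/M = 1 := by field_simp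
    rw [h0, h1] at adj
    rw [← intervalIntegral.integral_of_le (by norm_num : (0:ℝ) ≤ 1), ← adj]
    rw [Finset.sum_congr rfl (fun k hk => by
      push_cast
      exact hpiece k (Finset.mem_range.mp hk))]
    rw [show Finset.Icc 1 M = Finset.Ico 1 (M+1) by rw [Finset.Ico_add_one_right_eq_Icc]]
    rw [Finset.sum_Ico_eq_sum_range]
    simp only [Nat.add_sub_cancel, Finset.mul_sum]
    exact Finset.sum_congr rfl (fun k _ => by rw [Nat.add_comm 1 k])
  · intro k hk
    push_cast
    exact hint k hk

lemma exp_limit {t : ℕ → ℝ} {L : ℝ} (ht : Filter.Tendsto t atTop (nhds L))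
    (hpos : ∀ᶠ M in atTop, 0 < t M) :
    Filter.Tendsto (fun M : ℕ => (1 - t M / M) ^ M) atTop (nhds (Real.exp (-L))) := by
  have hdiv : Tendsto (fun M : ℕ => t M / M) atTop (nhds 0) :=
    ht.div_atTop tendsto_natCast_atTop_atTop
  -- slope of log(1+·) at 0
  have hderiv : HasDerivAt (fun v : ℝ => Real.log (1 + v)) 1 0 := by
    have h1 : HasDerivAt (fun v : ℝ => 1 + v) 1 0 := by
      simpa using (hasDerivAt_id (0:ℝ)).const_add 1
    have h2 := (Real.hasDerivAt_log (by norm_num : (1:ℝ) + 0 ≠ 0)).comp 0 h1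
    simp at h2; exact h2
  have hslope : Tendsto (fun v : ℝ => Real.log (1 + v) / v) (nhdsWithin 0 {0}ᶜ) (nhds 1) := by
    have := hasDerivAt_iff_tendsto_slope.mp hderiv
    refine this.congr (fun v => ?_)
    simp [slope_def_field, Real.log_one]
  have hv : Tendsto (fun M : ℕ => -(t M / M)) atTop (nhdsWithin 0 {0}ᶜ) := by
    apply tendsto_nhdsWithin_of_tendsto_nhds_of_eventually_within
    · simpa using hdiv.neg
    · filter_upwards [hpos, eventually_ge_atTop 1] with M hp hM
      have hM0 : (0:ℝ) < M := by exact_mod_cast hM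
      have : 0 < t M / M := div_pos hp hM0
      simp only [Set.mem_compl_iff, Set.mem_singleton_iff]
      intro h
      rw [neg_eq_zero] at h
      linarith
  have hmain : Tendsto (fun M : ℕ => (M:ℝ) * Real.log (1 - t M / M)) atTop (nhds (-L)) := by
    have hlim : Tendsto (fun M : ℕ => (-(t M)) * (Real.log (1 + -(t M / M)) / (-(t M / M))))
        atTop (nhds ((-L) * 1)) := (ht.neg).mul (hslope.comp hv)
    rw [mul_one] at hlim
    refine hlim.congr' ?_
    filter_upwards [hpos, eventually_ge_atTop 1] with M hp hM
    have hM0 : (0:ℝ) < M := by exact_mod_cast hM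
    have htM : t M ≠ 0 := ne_of_gt hp
    rw [show (1:ℝ) + -(t M / M) = 1 - t M / M by ring]
    field_simp
  have hsmall : ∀ᶠ M : ℕ in atTop, 0 < 1 - t M / M := by
    have := hdiv.eventually (eventually_lt_nhds (by norm_num : (0:ℝ) < 1))
    filter_upwards [this] with M h; linarith
  have hexp : Tendsto (fun M : ℕ => Real.exp ((M:ℝ) * Real.log (1 - t M / M))) atTop
      (nhds (Real.exp (-L))) := (Real.continuous_exp.tendsto _).comp hmain
  refine hexp.congr' ?_
  filter_upwards [hsmall] with M h
  rw [Real.exp_nat_mul, Real.exp_log h]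

lemma ceil_ratio {x : ℝ} (hx : 0 < x) :
    Filter.Tendsto (fun M : ℕ => (⌈(M:ℝ) * x⌉₊ : ℝ) / M) atTop (nhds x) := by
  have h1 : Tendsto (fun M : ℕ => x + 1 / (M:ℝ)) atTop (nhds x) := by
    simpa using tendsto_const_nhds.add (tendsto_one_div_atTop_nhds_zero_nat (𝕜 := ℝ))
  refine tendsto_of_tendsto_of_tendsto_of_le_of_le' tendsto_const_nhds h1 ?_ ?_
  · filter_upwards [eventually_ge_atTop 1] with M hM
    have hM0 : (0:ℝ) < M := by exact_mod_cast hM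
    rw [le_div_iff₀ hM0, mul_comm]
    exact Nat.le_ceil _
  · filter_upwards [eventually_ge_atTop 1] with M hM
    have hM0 : (0:ℝ) < M := by exact_mod_cast hM
    rw [div_le_iff₀ hM0]
    have := Nat.ceil_lt_add_one (by positivity : (0:ℝ) ≤ (M:ℝ) * x)
    calc (⌈(M:ℝ) * x⌉₊ : ℝ) ≤ (M:ℝ)*x + 1 := le_of_lt this
    _ = (x + 1/M) * M := by field_simp
lemma rpow_ratio {x : ℝ} (hx : 0 < x) (a : ℝ) :
    Filter.Tendsto (fun M : ℕ => ((⌈(M:ℝ) * x⌉₊ : ℝ) / M) ^ a) atTop (nhds (x ^ a)) :=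
  ((Real.continuousAt_rpow_const x a (Or.inl (ne_of_gt hx))).tendsto).comp (ceil_ratio hx)

lemma S_asymp (a : ℝ) (ha : -1 < a) :
    Filter.Tendsto (fun M : ℕ => (∑ k ∈ Finset.Icc 1 M, (k:ℝ) ^ a) / (M:ℝ) ^ (a+1))
      atTop (nhds (1/(a+1))) := by
  have ha1 : (0:ℝ) < a + 1 := by linarith
  set F : ℕ → ℝ → ℝ := fun M x => ((⌈(M:ℝ) * x⌉₊ : ℝ) / M) ^ a with hF
  have hdct : Tendsto (fun M : ℕ => ∫ x in Set.Ioc (0:ℝ) 1, F M x) atTop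
      (nhds (∫ x in Set.Ioc (0:ℝ) 1, x ^ a)) := by
    apply tendsto_integral_filter_of_dominated_convergence (fun x => x ^ a + 2 ^ a)
    · filter_upwards with M
      have : Measurable (F M) := by
        have h1 : Measurable fun x : ℝ => ⌈(M:ℝ) * x⌉₊ :=
          Nat.measurable_ceil.comp (measurable_id.const_mul _)
        exact (measurable_from_nat (f := fun n : ℕ => ((n:ℝ)/M)^a)).comp h1
      exact this.aestronglyMeasurable
    · filter_upwards [eventually_ge_atTop 1] with M hM
      rw [ae_restrict_iff' measurableSet_Ioc]
      filter_upwards with x hx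
      have hM0 : (0:ℝ) < M := by exact_mod_cast hM
      have hx0 : 0 < x := hx.1
      set r : ℝ := (⌈(M:ℝ) * x⌉₊ : ℝ) / M with hr
      have hr0 : 0 < r := by
        have : (1:ℕ) ≤ ⌈(M:ℝ) * x⌉₊ := Nat.one_le_ceil_iff.mpr (by positivity)
        have : (1:ℝ) ≤ (⌈(M:ℝ) * x⌉₊ : ℝ) := by exact_mod_cast this
        positivity
      have hr1 : x ≤ r := by
        rw [hr, le_div_iff₀ hM0, mul_comm]; exact Nat.le_ceil _
      have hr2 : r ≤ 2 := by
        rw [hr, div_le_iff₀ hM0]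
        have h1 := Nat.ceil_lt_add_one (by positivity : (0:ℝ) ≤ (M:ℝ) * x)
        have hx1 : x ≤ 1 := hx.2
        have hM1 : (1:ℝ) ≤ M := by exact_mod_cast hM
        nlinarith
      have hnorm : ‖F M x‖ = r ^ a := by
        rw [Real.norm_eq_abs, abs_of_nonneg (Real.rpow_nonneg hr0.le a)]
      rw [hnorm]
      rcases le_or_gt 0 a with h | h
      · have : r ^ a ≤ 2 ^ a := Real.rpow_le_rpow hr0.le hr2 h
        have hx0 : 0 ≤ x ^ a := Real.rpow_nonneg hx.1.le a
        linarith
      · have : r ^ a ≤ x ^ a := Real.rpow_le_rpow_of_nonpos hx.1 hr1 h.le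
        have h2 : (0:ℝ) ≤ 2 ^ a := Real.rpow_nonneg (by norm_num) a
        linarith
    · have h1 : IntegrableOn (fun x : ℝ => x ^ a) (Set.Ioc (0:ℝ) 1) volume := by
        have := intervalIntegral.intervalIntegrable_rpow' (a := 0) (b := 1) ha
        rwa [intervalIntegrable_iff_integrableOn_Ioc_of_le (by norm_num : (0:ℝ) ≤ 1)] at this
      exact h1.add (integrableOn_const (C := (2:ℝ)^a) (by simp [Real.volume_Ioc]))
    · rw [ae_restrict_iff' measurableSet_Ioc]
      filter_upwards with x hx
      exact rpow_ratio hx.1 a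
  have hcomp : (∫ x in Set.Ioc (0:ℝ) 1, x ^ a) = 1/(a+1) := by
    rw [← intervalIntegral.integral_of_le (by norm_num : (0:ℝ) ≤ 1),
      integral_rpow (Or.inl ha)]
    rw [Real.one_rpow, Real.zero_rpow (ne_of_gt ha1)]
    ring
  rw [hcomp] at hdct
  refine hdct.congr' ?_
  filter_upwards [eventually_ge_atTop 1] with M hM
  have hM0 : (0:ℝ) < M := by exact_mod_cast hM
  rw [step_integral M hM (fun i => ((i:ℝ)/M) ^ a)]
  rw [Finset.sum_congr rfl (fun i _ => Real.div_rpow (Nat.cast_nonneg i) hM0.le a)]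
  rw [← Finset.sum_div, Real.rpow_add_one (ne_of_gt hM0)]
  rw [one_div, inv_mul_eq_div, div_div]

end Stmt11Helpers

/-- Algebraic fitness model `φ(i) = i^a`, `a > -1`: the asymptotic fraction of
followers is `∫₀¹ exp(-(a+1) x^a) dx`. -/
theorem stmt11 (a : ℝ) (ha : -1 < a) :
    Filter.Tendsto (fun M : ℕ =>
        (1 / (M : ℝ)) * ∑ i ∈ Finset.Icc 1 M,
          (1 - (i : ℝ) ^ a / ∑ k ∈ Finset.Icc 1 M, (k : ℝ) ^ a) ^ M)
      Filter.atTop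
      (nhds (∫ x in (0:ℝ)..1, Real.exp (-(a + 1) * x ^ a))) := by
  have ha1 : (0:ℝ) < a + 1 := by linarith
  set S : ℕ → ℝ := fun M => ∑ k ∈ Finset.Icc 1 M, (k:ℝ) ^ a with hS
  have hSpos : ∀ M : ℕ, 1 ≤ M → 0 < S M := by
    intro M hM
    refine Finset.sum_pos (fun k hk => ?_) ⟨1, Finset.mem_Icc.mpr ⟨le_refl 1, hM⟩⟩
    have h1 : 1 ≤ k := (Finset.mem_Icc.mp hk).1
    have : (0:ℝ) < k := by exact_mod_cast h1
    exact Real.rpow_pos_of_pos this a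
  have hinv : Filter.Tendsto (fun M : ℕ => (M:ℝ)^(a+1) / S M) atTop (nhds (a+1)) := by
    have h := (S_asymp a ha).inv₀ (by positivity)
    rw [one_div, inv_inv] at h
    refine h.congr (fun M => ?_)
    rw [inv_div]
  set F : ℕ → ℝ → ℝ := fun M x => (1 - ((⌈(M:ℝ) * x⌉₊ : ℝ)) ^ a / S M) ^ M with hF
  have hdct : Filter.Tendsto (fun M : ℕ => ∫ x in Set.Ioc (0:ℝ) 1, F M x) atTop
      (nhds (∫ x in Set.Ioc (0:ℝ) 1, Real.exp (-(a+1) * x ^ a))) := by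
    apply tendsto_integral_filter_of_dominated_convergence (fun _ => (1:ℝ))
    · filter_upwards with M
      have : Measurable (F M) := by
        have h1 : Measurable fun x : ℝ => ⌈(M:ℝ) * x⌉₊ :=
          Nat.measurable_ceil.comp (measurable_id.const_mul _)
        exact (measurable_from_nat (f := fun n : ℕ => (1 - (n:ℝ)^a / S M)^M)).comp h1
      exact this.aestronglyMeasurable
    · filter_upwards [eventually_ge_atTop 1] with M hM
      rw [ae_restrict_iff' measurableSet_Ioc]
      filter_upwards with x hx
      have hM0 : (0:ℝ) < M := by exact_mod_cast hM
      have hx0 : 0 < x := hx.1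
      have hi1 : 1 ≤ ⌈(M:ℝ) * x⌉₊ := Nat.one_le_ceil_iff.mpr (by positivity)
      have hiM : ⌈(M:ℝ) * x⌉₊ ≤ M := by
        rw [Nat.ceil_le]
        calc (M:ℝ) * x ≤ M * 1 := by gcongr; exact hx.2
        _ = M := mul_one _
      have hmem : ⌈(M:ℝ) * x⌉₊ ∈ Finset.Icc 1 M := Finset.mem_Icc.mpr ⟨hi1, hiM⟩
      have hle : ((⌈(M:ℝ) * x⌉₊ : ℝ)) ^ a ≤ S M :=
        Finset.single_le_sum (f := fun k : ℕ => (k:ℝ) ^ a)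
          (fun k _ => Real.rpow_nonneg (Nat.cast_nonneg k) a) hmem
      have hq0 : 0 ≤ ((⌈(M:ℝ) * x⌉₊ : ℝ)) ^ a / S M :=
        div_nonneg (Real.rpow_nonneg (Nat.cast_nonneg _) a) (hSpos M hM).le
      have hq1 : ((⌈(M:ℝ) * x⌉₊ : ℝ)) ^ a / S M ≤ 1 :=
        (div_le_one (hSpos M hM)).mpr hle
      have hF0 : 0 ≤ F M x := pow_nonneg (by linarith) M
      rw [Real.norm_eq_abs, abs_of_nonneg hF0]
      exact pow_le_one₀ (by linarith) (by linarith)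
    · exact integrableOn_const (by simp [Real.volume_Ioc])
    · rw [ae_restrict_iff' measurableSet_Ioc]
      filter_upwards with x hx
      have hx0 : 0 < x := hx.1
      have ht : Filter.Tendsto
          (fun M : ℕ => ((⌈(M:ℝ) * x⌉₊ : ℝ) / M) ^ a * ((M:ℝ)^(a+1) / S M))
          atTop (nhds (x ^ a * (a+1))) := (rpow_ratio hx0 a).mul hinv
      have hexp := exp_limit ht ?_
      · have heq : -(x ^ a * (a+1)) = -(a+1) * x ^ a := by ring
        rw [heq] at hexp
        refine hexp.congr' ?_
        filter_upwards [eventually_ge_atTop 1] with M hM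
        have hM0 : (0:ℝ) < M := by exact_mod_cast hM
        have hkey : ((⌈(M:ℝ) * x⌉₊ : ℝ) / M) ^ a * ((M:ℝ)^(a+1) / S M) / M
            = ((⌈(M:ℝ) * x⌉₊ : ℝ)) ^ a / S M := by
          rw [Real.div_rpow (Nat.cast_nonneg _) hM0.le, Real.rpow_add_one (ne_of_gt hM0)]
          have hMa : (M:ℝ) ^ a ≠ 0 := (Real.rpow_pos_of_pos hM0 a).ne'
          field_simp [hMa, hM0.ne', (hSpos M hM).ne']
        rw [hkey]
      · filter_upwards [eventually_ge_atTop 1] with M hM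
        have hM0 : (0:ℝ) < M := by exact_mod_cast hM
        have hi1 : 1 ≤ ⌈(M:ℝ) * x⌉₊ := Nat.one_le_ceil_iff.mpr (by positivity)
        have hi1' : (1:ℝ) ≤ (⌈(M:ℝ) * x⌉₊ : ℝ) := by exact_mod_cast hi1
        have h1 : (0:ℝ) < ((⌈(M:ℝ) * x⌉₊ : ℝ) / M) ^ a :=
          Real.rpow_pos_of_pos (by positivity) a
        have h2 : (0:ℝ) < (M:ℝ)^(a+1) / S M :=
          div_pos (Real.rpow_pos_of_pos hM0 _) (hSpos M hM)
        positivity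
  have hfin : (∫ x in Set.Ioc (0:ℝ) 1, Real.exp (-(a+1) * x ^ a))
      = ∫ x in (0:ℝ)..1, Real.exp (-(a + 1) * x ^ a) := by
    rw [intervalIntegral.integral_of_le (by norm_num : (0:ℝ) ≤ 1)]
  rw [hfin] at hdct
  refine hdct.congr' ?_
  filter_upwards [eventually_ge_atTop 1] with M hM
  rw [step_integral M hM (fun i => (1 - (i:ℝ) ^ a / S M) ^ M)]
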